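/- In the canonical calculus G₀ whose only logical rules are Θ/⇒ Qv₁(p₁(v₁),p₂(v₁)) and Θ/Qv₁(p₁(v₁),p₂(v₁))⇒ with Θ = {p₁(v₁)⇒p₂(v₁); ⇒p₁(c₁); ⇒p₂(c₁); p₁(c₂)⇒; p₂(c₂)⇒; p₁(c₃)⇒; ⇒p₂(c₃)}, every provable sequent is a logical axiom (i.e. contains formulas A ∈ Γ, B ∈ Δ with A ≡_α B); consequently G₀ admits cut-elimination although it is not coherent. -/

import Mathlib

open Classical

noncomputable section

/-! A first-order language with `(n,k)`-ary quantifiers. -/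

/-- A signature: function symbols, predicate symbols, and `(n,k)`-ary
quantifiers (`qn Q = n` formulas connected, `qk Q = k` variables bound). -/
structure Sig where
  Func : Type
  farity : Func → ℕ
  Pred : Type
  parity : Pred → ℕ
  Quant : Type
  qn : Quant → ℕ
  qk : Quant → ℕ

/-- Terms of `L(D)`: the language extended with an individual constant for
each element of `D` (take `D := Empty` for the base language `L`). -/
inductive Tm (σ : Sig) (D : Type) where
  | var : ℕ → Tm σ D
  | func : (f : σ.Func) → (Fin (σ.farity f) → Tm σ D) → Tm σ D
  | dconst : D → Tm σ D

/-- Formulas of `L(D)`: atomic formulas and `(n,k)`-ary quantified formulas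
`Q x₁…x_k (ψ₁,…,ψₙ)`. -/
inductive Fm (σ : Sig) (D : Type) where
  | atom : (p : σ.Pred) → (Fin (σ.parity p) → Tm σ D) → Fm σ D
  | quant : (q : σ.Quant) → (Fin (σ.qk q) → ℕ) → (Fin (σ.qn q) → Fm σ D) → Fm σ D

variable {σ : Sig} {D : Type}

namespace Tm

/-- The variables occurring in a term. -/
def vars : Tm σ D → Set ℕ
  | .var n => {n}
  | .func _ ts => ⋃ i, (ts i).vars
  | .dconst _ => ∅

/-- Simultaneous substitution of terms for variables in a term. -/
def subst (s : ℕ → Tm σ D) : Tm σ D → Tm σ D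
  | .var n => s n
  | .func f ts => .func f (fun i => (ts i).subst s)
  | .dconst a => .dconst a

end Tm

namespace Fm

/-- The free variables of a formula. -/
def fv : Fm σ D → Set ℕ
  | .atom _ ts => ⋃ i, (ts i).vars
  | .quant _ xs ψ => (⋃ i, (ψ i).fv) \ Set.range xs

/-- The bound variables of a formula. -/
def bv : Fm σ D → Set ℕ
  | .atom _ _ => ∅
  | .quant _ xs ψ => Set.range xs ∪ ⋃ i, (ψ i).bv

/-- All variables occurring (free or bound) in a formula. -/
def allVars : Fm σ D → Set ℕ
  | .atom _ ts => ⋃ i, (ts i).vars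
  | .quant _ xs ψ => Set.range xs ∪ ⋃ i, (ψ i).allVars

/-- Simultaneous substitution of terms for the free variables of a formula
(bound variables are left untouched). -/
def subst (s : ℕ → Tm σ D) : Fm σ D → Fm σ D
  | .atom p ts => .atom p (fun i => (ts i).subst s)
  | .quant q xs ψ =>
      .quant q xs (fun i => (ψ i).subst (fun n => if ∃ j, xs j = n then .var n else s n))

end Fm

/-- The renaming substitution `{z₁/x₁, …, z_k/x_k}`. -/
def renVar {k : ℕ} (xs zs : Fin k → ℕ) : ℕ → Tm σ D := fun n =>
  if h : ∃ j, xs j = n then .var (zs (Classical.choose h)) else .var n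

/-- `α`-equivalence: identity up to renaming of bound variables. Two
quantified formulas are `α`-equivalent when, for fresh distinct variables
`z₁,…,z_k`, the corresponding bodies with the bound variables renamed to the
`zᵢ` are `α`-equivalent. -/
inductive AlphaEq : Fm σ D → Fm σ D → Prop
  | atom (p : σ.Pred) (ts : Fin (σ.parity p) → Tm σ D) : AlphaEq (.atom p ts) (.atom p ts)
  | quant (q : σ.Quant) (xs ys : Fin (σ.qk q) → ℕ)
      (ψ φ : Fin (σ.qn q) → Fm σ D) (zs : Fin (σ.qk q) → ℕ)
      (hinj : Function.Injective zs)
      (hfresh : ∀ j, zs j ∉ (Fm.quant q xs ψ).allVars ∪ (Fm.quant q ys φ).allVars)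
      (h : ∀ i, AlphaEq ((ψ i).subst (renVar xs zs)) ((φ i).subst (renVar ys zs))) :
      AlphaEq (.quant q xs ψ) (.quant q ys φ)

/-! Structures and the congruence relation `∼^S`. -/

/-- An `L`-structure: a nonempty domain with interpretations of function and
predicate symbols (two-valued predicates). -/
structure Struc (σ : Sig) where
  D : Type
  ne : Nonempty D
  funcI : (f : σ.Func) → (Fin (σ.farity f) → D) → D
  predI : (p : σ.Pred) → (Fin (σ.parity p) → D) → Bool

/-- Evaluation of a term of `L(D)` in `S` under an assignment. -/
def Tm.eval (S : Struc σ) (v : ℕ → S.D) : Tm σ S.D → S.D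
  | .var n => v n
  | .func f ts => S.funcI f (fun i => (ts i).eval S v)
  | .dconst a => a

/-- The congruence `∼^S` on terms of `L(D)`: reflexivity on variables, closed
terms with the same value are related, and compatibility with function
symbols. -/
inductive TmEq (S : Struc σ) : Tm σ S.D → Tm σ S.D → Prop
  | var (n : ℕ) : TmEq S (.var n) (.var n)
  | closed {t t' : Tm σ S.D} : t.vars = ∅ → t'.vars = ∅ →
      (∀ v, t.eval S v = t'.eval S v) → TmEq S t t'
  | func (f : σ.Func) (ts ts' : Fin (σ.farity f) → Tm σ S.D) :
      (∀ i, TmEq S (ts i) (ts' i)) → TmEq S (.func f ts) (.func f ts')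

/-- The congruence `∼^S` on formulas of `L(D)`. -/
inductive FmEq (S : Struc σ) : Fm σ S.D → Fm σ S.D → Prop
  | atom (p : σ.Pred) (ts ts' : Fin (σ.parity p) → Tm σ S.D) :
      (∀ i, TmEq S (ts i) (ts' i)) → FmEq S (.atom p ts) (.atom p ts')
  | quant (q : σ.Quant) (xs ys : Fin (σ.qk q) → ℕ)
      (ψ φ : Fin (σ.qn q) → Fm σ S.D) (zs : Fin (σ.qk q) → ℕ)
      (hinj : Function.Injective zs)
      (hfresh : ∀ j, zs j ∉ (Fm.quant q xs ψ).allVars ∪ (Fm.quant q ys φ).allVars)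
      (h : ∀ i, FmEq S ((ψ i).subst (renVar xs zs)) ((φ i).subst (renVar ys zs))) :
      FmEq S (.quant q xs ψ) (.quant q ys φ)

/-! Canonical rules: clauses over the simplified language `L^n_k(Con)`
(`n` `k`-ary predicate symbols `p₁,…,pₙ`, constants, no function symbols). -/

/-- Terms of the simplified language: (schematic) variables and constants,
both numbered. -/
inductive RTm where
  | rvar : ℕ → RTm
  | rconst : ℕ → RTm
deriving DecidableEq

/-- Atomic formulas `pᵢ(t₁,…,t_k)` of `L^n_k(Con)`. -/
structure RAtom (n k : ℕ) where
  idx : Fin n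
  args : Fin k → RTm

/-- A clause over `L^n_k(Con)`. -/
structure RClause (n k : ℕ) where
  ant : List (RAtom n k)
  suc : List (RAtom n k)

def RClause.atoms {n k : ℕ} (cl : RClause n k) : List (RAtom n k) := cl.ant ++ cl.suc

/-- A canonical `(n,k)`-ary rule `Θ/Q(s)` for the quantifier `q`; `side = true`
means a right-introduction rule `Θ/⇒ Q v⃗ (p₁(v⃗),…,pₙ(v⃗))`, `side = false`
a left-introduction rule. -/
structure Rule (σ : Sig) where
  q : σ.Quant
  side : Bool
  prem : List (RClause (σ.qn q) (σ.qk q))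

/-- A canonical calculus: a finite list of canonical rules. -/
abbrev CanCalc (σ : Sig) := List (Rule σ)

/-- Variables occurring in a set of rule-clauses. -/
def ruleVars {n k : ℕ} (Θ : List (RClause n k)) : Set ℕ :=
  {x | ∃ cl ∈ Θ, ∃ a ∈ cl.atoms, ∃ j, a.args j = RTm.rvar x}

/-- Constants occurring in a set of rule-clauses. -/
def ruleConsts {n k : ℕ} (Θ : List (RClause n k)) : Set ℕ :=
  {c | ∃ cl ∈ Θ, ∃ a ∈ cl.atoms, ∃ j, a.args j = RTm.rconst c}

/-- Semantics of rule-clauses in a structure for `L^n_k(Con)`. -/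
def RAtom.evalR {n k : ℕ} {D : Type} (cI : ℕ → D) (pI : Fin n → (Fin k → D) → Bool)
    (v : ℕ → D) (a : RAtom n k) : Bool :=
  pI a.idx (fun j => match a.args j with
    | .rvar x => v x
    | .rconst c => cI c)

def RClause.trueIn {n k : ℕ} {D : Type} (cI : ℕ → D) (pI : Fin n → (Fin k → D) → Bool)
    (v : ℕ → D) (cl : RClause n k) : Prop :=
  (∃ a ∈ cl.ant, a.evalR cI pI v = false) ∨ (∃ a ∈ cl.suc, a.evalR cI pI v = true)

/-- Validity of a set of rule-clauses in a structure (truth under all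
assignments). -/
def RValidIn {n k : ℕ} (D : Type) (cI : ℕ → D) (pI : Fin n → (Fin k → D) → Bool)
    (Θ : List (RClause n k)) : Prop :=
  ∀ v : ℕ → D, ∀ cl ∈ Θ, cl.trueIn cI pI v

/-- Classical consistency of a set of rule-clauses. -/
def RConsistent {n k : ℕ} (Θ : List (RClause n k)) : Prop :=
  ∃ (D : Type) (_ : Nonempty D) (cI : ℕ → D) (pI : Fin n → (Fin k → D) → Bool) (v : ℕ → D),
    ∀ cl ∈ Θ, cl.trueIn cI pI v

/-- Renaming of variables and constants in rule-clauses. -/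
def RTm.ren (rv rc : ℕ → ℕ) : RTm → RTm
  | .rvar x => .rvar (rv x)
  | .rconst c => .rconst (rc c)

def RAtom.ren {n k : ℕ} (rv rc : ℕ → ℕ) (a : RAtom n k) : RAtom n k :=
  ⟨a.idx, fun j => (a.args j).ren rv rc⟩

def RClause.ren {n k : ℕ} (rv rc : ℕ → ℕ) (cl : RClause n k) : RClause n k :=
  ⟨cl.ant.map (RAtom.ren rv rc), cl.suc.map (RAtom.ren rv rc)⟩

def renClauses {n k : ℕ} (rv rc : ℕ → ℕ) (Θ : List (RClause n k)) : List (RClause n k) :=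
  Θ.map (RClause.ren rv rc)

/-- A renaming suitable for forming `Rnm(Θ₁ ∪ Θ₂)`: variables and constants of
`Θ₂` clashing with `Θ₁` are renamed injectively to fresh ones, the others
are kept. -/
def GoodRen {n k : ℕ} (Θ₁ Θ₂ : List (RClause n k)) (rv rc : ℕ → ℕ) : Prop :=
  Function.Injective rv ∧ Function.Injective rc ∧
  (∀ x ∈ ruleVars Θ₂,
    (x ∈ ruleVars Θ₁ → rv x ∉ ruleVars Θ₁ ∪ ruleVars Θ₂) ∧
    (x ∉ ruleVars Θ₁ → rv x = x)) ∧
  (∀ c ∈ ruleConsts Θ₂,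
    (c ∈ ruleConsts Θ₁ → rc c ∉ ruleConsts Θ₁ ∪ ruleConsts Θ₂) ∧
    (c ∉ ruleConsts Θ₁ → rc c = c))

/-- **Coherence** of a canonical calculus: for every two dual rules
`Θ₁/⇒A` and `Θ₂/A⇒`, the set `Rnm(Θ₁ ∪ Θ₂)` is classically inconsistent. -/
def Coherent {σ : Sig} (G : CanCalc σ) : Prop :=
  ∀ (q : σ.Quant) (Θ₁ Θ₂ : List (RClause (σ.qn q) (σ.qk q))),
    Rule.mk q true Θ₁ ∈ G → Rule.mk q false Θ₂ ∈ G →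
    ∀ rv rc, GoodRen Θ₁ Θ₂ rv rc → ¬ RConsistent (Θ₁ ++ renClauses rv rc Θ₂)

/-! Two-valued non-deterministic matrices and their semantics. -/

/-- A 2Nmatrix: truth values `Bool` with `true` designated; each `(n,k)`-ary
quantifier gets a distribution function `Q̃ : P⁺({t,f}ⁿ) → P⁺({t,f})`. -/
structure NMatrix (σ : Sig) where
  qI : (q : σ.Quant) → Set (Fin (σ.qn q) → Bool) → Set Bool
  ne : ∀ q E, E.Nonempty → (qI q E).Nonempty

/-- The substitution `{ā₁/x₁, …, ā_k/x_k}` of individual constants for the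
bound variables. -/
def dsubst {k : ℕ} {D : Type} (xs : Fin k → ℕ) (as : Fin k → D) : ℕ → Tm σ D := fun n =>
  if h : ∃ j, xs j = n then .dconst (as (Classical.choose h)) else .var n

/-- An `M`-legal `S`-valuation: a two-valued valuation of the sentences of
`L(D)` respecting `∼^S`, the interpretation of atomic sentences, and the
distribution functions of the quantifiers. -/
structure LegalVal {σ : Sig} (M : NMatrix σ) (S : Struc σ) where
  v : Fm σ S.D → Bool
  respects : ∀ ψ ψ' : Fm σ S.D, ψ.fv = ∅ → ψ'.fv = ∅ → FmEq S ψ ψ' → v ψ = v ψ'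
  atoms : ∀ (p : σ.Pred) (ts : Fin (σ.parity p) → Tm σ S.D) (w : ℕ → S.D),
    (Fm.atom p ts).fv = ∅ →
    v (.atom p ts) = S.predI p (fun i => (ts i).eval S w)
  quants : ∀ (q : σ.Quant) (xs : Fin (σ.qk q) → ℕ) (ψ : Fin (σ.qn q) → Fm σ S.D),
    (Fm.quant q xs ψ).fv = ∅ →
    v (.quant q xs ψ) ∈
      M.qI q {tp | ∃ as : Fin (σ.qk q) → S.D, tp = fun i => v ((ψ i).subst (dsubst xs as))}

/-- Embedding of `L`-terms into `L(D)`-terms. -/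
def Tm.emb {σ : Sig} {D : Type} : Tm σ Empty → Tm σ D
  | .var n => .var n
  | .func f ts => .func f (fun i => (ts i).emb)
  | .dconst a => a.elim

/-- Embedding of `L`-formulas into `L(D)`-formulas. -/
def Fm.emb {σ : Sig} {D : Type} : Fm σ Empty → Fm σ D
  | .atom p ts => .atom p (fun i => (ts i).emb)
  | .quant q xs ψ => .quant q xs (fun i => (ψ i).emb)

/-- Sequents over the language `L` (sets of formulas, as in the paper). -/
structure Sqnt (σ : Sig) where
  ant : Set (Fm σ Empty)
  suc : Set (Fm σ Empty)

/-- An `S`-substitution: an assignment of closed `L(D)`-terms to variables. -/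
def ClosedSub {σ : Sig} (S : Struc σ) (s : ℕ → Tm σ S.D) : Prop :=
  ∀ n, (s n).vars = ∅

/-- `σ[ψ]` : the closed instance of an `L`-formula under an `S`-substitution. -/
def applySub {σ : Sig} (S : Struc σ) (s : ℕ → Tm σ S.D) (A : Fm σ Empty) : Fm σ S.D :=
  (Fm.emb A).subst s

/-- `M`-validity of a sequent in `⟨S, v⟩`. -/
def SeqValid {σ : Sig} (M : NMatrix σ) (S : Struc σ) (V : LegalVal M S) (sq : Sqnt σ) : Prop :=
  ∀ s : ℕ → Tm σ S.D, ClosedSub S s →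
    (∀ A ∈ sq.ant, V.v (applySub S s A) = true) → ∃ B ∈ sq.suc, V.v (applySub S s B) = true

/-- The semantic consequence relation `S ⊢_M Γ⇒Δ`. -/
def Models {σ : Sig} (M : NMatrix σ) (Hyp : Set (Sqnt σ)) (sq : Sqnt σ) : Prop :=
  ∀ (S : Struc σ) (V : LegalVal M S),
    (∀ h ∈ Hyp, SeqValid M S V h) → SeqValid M S V sq

/-! The proof system of a canonical calculus. -/

/-- `t` is free for `x` in `ψ`. -/
def FreeFor {σ : Sig} {D : Type} (t : Tm σ D) (x : ℕ) : Fm σ D → Prop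
  | .atom _ _ => True
  | .quant q xs ψ =>
      (∃ j, xs j = x) ∨ x ∉ (Fm.quant q xs ψ).fv ∨
        ((∀ j, xs j ∉ t.vars) ∧ ∀ i, FreeFor t x (ψ i))

/-- An instantiation (`χ`-mapping) of the schematic language `L^n_k(Con)`
into `L`: formulas for the predicate symbols, `L`-variables for the schematic
variables (eigenvariables), `L`-terms for the constants. -/
structure ChiMap (σ : Sig) (n : ℕ) where
  fp : Fin n → Fm σ Empty
  fvv : ℕ → ℕ
  fc : ℕ → Tm σ Empty

/-- The `L`-term instantiating a schematic term. -/
def ChiMap.tm {σ : Sig} {n : ℕ} (χ : ChiMap σ n) : RTm → Tm σ Empty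
  | .rvar x => .var (χ.fvv x)
  | .rconst c => χ.fc c

/-- `χ[pᵢ(t₁,…,t_k)] = χ[pᵢ]{χ[t₁]/z₁, …, χ[t_k]/z_k}`. -/
def ChiMap.atomFm {σ : Sig} {n k : ℕ} (χ : ChiMap σ n) (zs : Fin k → ℕ)
    (a : RAtom n k) : Fm σ Empty :=
  (χ.fp a.idx).subst
    (fun m => if h : ∃ j, zs j = m then χ.tm (a.args (Classical.choose h)) else .var m)

def ChiMap.fmSet {σ : Sig} {n k : ℕ} (χ : ChiMap σ n) (zs : Fin k → ℕ)
    (l : List (RAtom n k)) : Set (Fm σ Empty) :=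
  {A | ∃ a ∈ l, A = χ.atomFm zs a}

/-- The formula `Q z₁…z_k (χ[p₁],…,χ[pₙ])` introduced by an application. -/
def concFm {σ : Sig} (q : σ.Quant) (zs : Fin (σ.qk q) → ℕ) (χ : ChiMap σ (σ.qn q)) :
    Fm σ Empty :=
  .quant q zs (fun i => χ.fp i)

/-- The side conditions of a `⟨R,Γ∪Δ,z₁,…,z_k⟩`-mapping. -/
def ChiOK {σ : Sig} (R : Rule σ) (χ : ChiMap σ (σ.qn R.q)) (zs : Fin (σ.qk R.q) → ℕ)
    (Γ Δ : Set (Fm σ Empty)) : Prop :=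
  Function.Injective zs ∧
  Function.Injective χ.fvv ∧
  (∀ c x, x ∈ ruleVars R.prem → χ.fvv x ∉ (χ.fc c).vars) ∧
  (∀ cl ∈ R.prem, ∀ a ∈ cl.atoms, ∀ j,
    FreeFor (χ.tm (a.args j)) (zs j) (χ.fp a.idx) ∧
    (∀ x, a.args j = RTm.rvar x →
      χ.fvv x ∉ (⋃ A ∈ Γ ∪ Δ, Fm.fv A) ∪ (concFm R.q zs χ).fv))

/-- Derivations in a canonical calculus `G` from hypotheses `Hyp`, with cuts
allowed only on formulas from `Cut`: the `α`-axioms, weakening, cut, and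
applications of the canonical rules of `G`. -/
inductive Deriv {σ : Sig} (G : CanCalc σ) (Hyp : Set (Sqnt σ)) (Cut : Set (Fm σ Empty)) :
    Sqnt σ → Prop
  | hyp {s : Sqnt σ} : s ∈ Hyp → Deriv G Hyp Cut s
  | ax {A A' : Fm σ Empty} : AlphaEq A A' → Deriv G Hyp Cut ⟨{A}, {A'}⟩
  | weaken {Γ Δ Γ' Δ' : Set (Fm σ Empty)} :
      Deriv G Hyp Cut ⟨Γ, Δ⟩ → Γ ⊆ Γ' → Δ ⊆ Δ' → Deriv G Hyp Cut ⟨Γ', Δ'⟩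
  | cut {A : Fm σ Empty} {Γ Δ : Set (Fm σ Empty)} : A ∈ Cut →
      Deriv G Hyp Cut ⟨Γ, insert A Δ⟩ → Deriv G Hyp Cut ⟨insert A Γ, Δ⟩ →
      Deriv G Hyp Cut ⟨Γ, Δ⟩
  | app {R : Rule σ} (hR : R ∈ G) (χ : ChiMap σ (σ.qn R.q)) (zs : Fin (σ.qk R.q) → ℕ)
      (Γ Δ : Set (Fm σ Empty)) (hok : ChiOK R χ zs Γ Δ)
      (hprem : ∀ cl ∈ R.prem,
        Deriv G Hyp Cut ⟨Γ ∪ χ.fmSet zs cl.ant, Δ ∪ χ.fmSet zs cl.suc⟩) :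
      Deriv G Hyp Cut
        (cond R.side ⟨Γ, insert (concFm R.q zs χ) Δ⟩ ⟨insert (concFm R.q zs χ) Γ, Δ⟩)

/-- Derivability (arbitrary cuts allowed). -/
def Derives {σ : Sig} (G : CanCalc σ) (Hyp : Set (Sqnt σ)) (sq : Sqnt σ) : Prop :=
  Deriv G Hyp Set.univ sq

/-- The formulas occurring in a set of sequents. -/
def hypFmlas {σ : Sig} (Hyp : Set (Sqnt σ)) : Set (Fm σ Empty) :=
  ⋃ s ∈ Hyp, s.ant ∪ s.suc

/-- A simple proof from `Hyp` : all cuts are on formulas from `Hyp`. -/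
def SimpleProof {σ : Sig} (G : CanCalc σ) (Hyp : Set (Sqnt σ)) (sq : Sqnt σ) : Prop :=
  Deriv G Hyp (hypFmlas Hyp) sq

/-- Applying an `L`-substitution to a sequent. -/
def Sqnt.substS {σ : Sig} (s : ℕ → Tm σ Empty) (sq : Sqnt σ) : Sqnt σ :=
  ⟨Fm.subst s '' sq.ant, Fm.subst s '' sq.suc⟩

/-- A set of sequents closed under substitution. -/
def SubstClosed {σ : Sig} (Hyp : Set (Sqnt σ)) : Prop :=
  ∀ sq ∈ Hyp, ∀ s : ℕ → Tm σ Empty, Sqnt.substS s sq ∈ Hyp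

/-- The free-variable condition for a set of sequents: variables occurring
bound are disjoint from variables occurring free. -/
def FVCond {σ : Sig} (T : Set (Sqnt σ)) : Prop :=
  (⋃ sq ∈ T, ⋃ A ∈ sq.ant ∪ sq.suc, Fm.bv A) ∩
  (⋃ sq ∈ T, ⋃ A ∈ sq.ant ∪ sq.suc, Fm.fv A) = ∅

/-- `M` is a strongly characteristic 2Nmatrix for `G`. -/
def StronglyChar {σ : Sig} (M : NMatrix σ) (G : CanCalc σ) : Prop :=
  ∀ Hyp : Set (Sqnt σ), SubstClosed Hyp → ∀ sq, Derives G Hyp sq ↔ Models M Hyp sq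

/-- `G` admits strong cut-elimination. -/
def StrongCutElim {σ : Sig} (G : CanCalc σ) : Prop :=
  ∀ Hyp : Set (Sqnt σ), SubstClosed Hyp → ∀ sq : Sqnt σ, FVCond (insert sq Hyp) →
    Derives G Hyp sq → SimpleProof G Hyp sq

/-- All quantifiers used in `G` are `(n,k)`-ary with `k ∈ {0,1}`. -/
def KAtMostOne {σ : Sig} (G : CanCalc σ) : Prop :=
  ∀ R ∈ G, σ.qk R.q = 0 ∨ σ.qk R.q = 1

/-! The calculus `G₀` of Example `notcoh`. -/

/-- A signature with a single `(2,1)`-ary quantifier `Q` (plus countably many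
function and predicate symbols of each arity). -/
def sig0 : Sig where
  Func := ℕ × ℕ
  farity := Prod.snd
  Pred := ℕ × ℕ
  parity := Prod.snd
  Quant := Unit
  qn := fun _ => 2
  qk := fun _ => 1

/-- `p₁(v₁)` -/ def a1v : RAtom 2 1 := ⟨0, fun _ => RTm.rvar 0⟩
/-- `p₂(v₁)` -/ def a2v : RAtom 2 1 := ⟨1, fun _ => RTm.rvar 0⟩
/-- `pᵢ(cⱼ)` -/ def aC (i : Fin 2) (j : ℕ) : RAtom 2 1 := ⟨i, fun _ => RTm.rconst j⟩

/-- `Θ = {p₁(v₁)⇒p₂(v₁); ⇒p₁(c₁); ⇒p₂(c₁); p₁(c₂)⇒; p₂(c₂)⇒; p₁(c₃)⇒; ⇒p₂(c₃)}` -/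
def Theta0 : List (RClause 2 1) :=
  [⟨[a1v], [a2v]⟩,
   ⟨[], [aC 0 1]⟩, ⟨[], [aC 1 1]⟩,
   ⟨[aC 0 2], []⟩, ⟨[aC 1 2], []⟩,
   ⟨[aC 0 3], []⟩, ⟨[], [aC 1 3]⟩]

/-- The calculus `G₀`, consisting of the two dual rules `Θ/⇒Qv₁(p₁(v₁),p₂(v₁))`
and `Θ/Qv₁(p₁(v₁),p₂(v₁))⇒`. -/
def G0 : CanCalc sig0 :=
  [Rule.mk () true Theta0, Rule.mk () false Theta0]


namespace DbX
open Classical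
variable {σ : Sig} {D : Type}

inductive DTm (σ : Sig) (D : Type) where
  | fvar : ℕ → DTm σ D
  | bvar : ℕ → ℕ → DTm σ D
  | func : (f : σ.Func) → (Fin (σ.farity f) → DTm σ D) → DTm σ D
  | dconst : D → DTm σ D

inductive DFm (σ : Sig) (D : Type) where
  | atom : (p : σ.Pred) → (Fin (σ.parity p) → DTm σ D) → DFm σ D
  | quant : (q : σ.Quant) → (Fin (σ.qn q) → DFm σ D) → DFm σ D

def shiftD : DTm σ D → DTm σ D
  | .fvar n => .fvar n
  | .bvar d j => .bvar (d+1) j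
  | .func f ts => .func f (fun i => shiftD (ts i))
  | .dconst a => .dconst a

def dbT (e : ℕ → DTm σ D) : Tm σ D → DTm σ D
  | .var n => e n
  | .func f ts => .func f (fun i => dbT e (ts i))
  | .dconst a => .dconst a

def pushE (e : ℕ → DTm σ D) {k : ℕ} (xs : Fin k → ℕ) : ℕ → DTm σ D := fun n =>
  if h : ∃ j, xs j = n then .bvar 0 (Classical.choose h).val else shiftD (e n)

def dbF (e : ℕ → DTm σ D) : Fm σ D → DFm σ D
  | .atom p ts => .atom p (fun i => dbT e (ts i))
  | .quant q xs ψ => .quant q (fun i => dbF (pushE e xs) (ψ i))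

def e0 : ℕ → DTm σ D := fun n => .fvar n

theorem dbT_congr {e e' : ℕ → DTm σ D} : ∀ t : Tm σ D, (∀ n ∈ t.vars, e n = e' n) → dbT e t = dbT e' t := by
  intro t
  induction t with
  | var n => intro h; exact h n rfl
  | func f ts ih =>
      intro h
      simp only [dbT]
      congr 1
      funext i
      exact ih i (fun n hn => h n (Set.mem_iUnion.2 ⟨i, hn⟩))
  | dconst a => intro _; rfl

theorem dbF_congr {e e' : ℕ → DTm σ D} : ∀ A : Fm σ D, (∀ n ∈ A.fv, e n = e' n) → dbF e A = dbF e' A := by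
  intro A
  induction A generalizing e e' with
  | atom p ts =>
      intro h
      simp only [dbF]
      congr 1
      funext i
      exact dbT_congr _ (fun n hn => h n (Set.mem_iUnion.2 ⟨i, hn⟩))
  | quant q xs ψ ih =>
      intro h
      simp only [dbF]
      congr 1
      funext i
      refine ih i (fun n hn => ?_)
      unfold pushE
      by_cases hb : ∃ j, xs j = n
      · simp [hb]
      · have : n ∈ (Fm.quant q xs ψ).fv := by
          simp only [Fm.fv, Set.mem_diff, Set.mem_iUnion]
          exact ⟨⟨i, hn⟩, by simpa [Set.mem_range] using hb⟩
        simp [hb, h n this]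
end DbX

namespace DbX
variable {σ : Sig} {D : Type}

theorem dbT_subst (e : ℕ → DTm σ D) (s : ℕ → Tm σ D) :
    ∀ t : Tm σ D, dbT e (t.subst s) = dbT (fun n => dbT e (s n)) t := by
  intro t
  induction t with
  | var n => rfl
  | func f ts ih => simp only [Tm.subst, dbT]; congr 1; funext i; exact ih i
  | dconst a => rfl

theorem dbT_push_notmem {k : ℕ} {xs : Fin k → ℕ} (e : ℕ → DTm σ D) :
    ∀ t : Tm σ D, (∀ m ∈ t.vars, ¬ ∃ j, xs j = m) → dbT (pushE e xs) t = shiftD (dbT e t) := by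
  intro t
  induction t with
  | var n =>
      intro h
      have := h n rfl
      simp [dbT, pushE, this]
  | func f ts ih =>
      intro h
      simp only [dbT, shiftD]
      congr 1
      funext i
      exact ih i (fun m hm => h m (Set.mem_iUnion.2 ⟨i, hm⟩))
  | dconst a => intro _; rfl

/-- substitution lemma under a no-capture condition -/
theorem dbF_subst (e : ℕ → DTm σ D) (s : ℕ → Tm σ D) :
    ∀ A : Fm σ D, (∀ n ∈ A.fv, s n = .var n ∨ ∀ m ∈ (s n).vars, m ∉ A.bv) →
    dbF e (A.subst s) = dbF (fun n => dbT e (s n)) A := by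
  intro A
  induction A generalizing e s with
  | atom p ts =>
      intro _
      simp only [Fm.subst, dbF]
      congr 1
      funext i
      exact dbT_subst e s (ts i)
  | quant q xs ψ ih =>
      intro hC
      simp only [Fm.subst, dbF]
      congr 1
      funext i
      rw [ih i]
      · refine dbF_congr _ (fun n hn => ?_)
        by_cases hb : ∃ j, xs j = n
        · simp only [hb, if_true]
          show dbT (pushE e xs) (.var n) = pushE (fun n => dbT e (s n)) xs n
          simp [dbT, pushE, hb]
        · simp only [hb, if_false]
          have hfv : n ∈ (Fm.quant q xs ψ).fv := by
            simp only [Fm.fv, Set.mem_diff, Set.mem_iUnion]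
            exact ⟨⟨i, hn⟩, by simpa [Set.mem_range] using hb⟩
          have : pushE (fun n => dbT e (s n)) xs n = shiftD (dbT e (s n)) := by
            simp [pushE, hb]
          rw [this]
          rcases hC n hfv with h1 | h1
          · rw [h1]
            show dbT (pushE e xs) (.var n) = shiftD (dbT e (.var n))
            simp [dbT, pushE, hb]
          · refine dbT_push_notmem e (s n) (fun m hm hex => ?_)
            refine h1 m hm ?_
            rcases hex with ⟨j, hj⟩
            simp only [Fm.bv, Set.mem_union]
            exact Or.inl ⟨j, hj⟩
      · intro n hn
        by_cases hb : ∃ j, xs j = n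
        · simp [hb]
        · simp only [hb, if_false]
          have hfv : n ∈ (Fm.quant q xs ψ).fv := by
            simp only [Fm.fv, Set.mem_diff, Set.mem_iUnion]
            exact ⟨⟨i, hn⟩, by simpa [Set.mem_range] using hb⟩
          rcases hC n hfv with h1 | h1
          · exact Or.inl h1
          · refine Or.inr (fun m hm hmb => h1 m hm ?_)
            simp only [Fm.bv, Set.mem_union, Set.mem_iUnion]
            exact Or.inr ⟨i, hmb⟩
end DbX

namespace DbX
variable {σ : Sig} {D : Type}

theorem tm_subst_congr {s s' : ℕ → Tm σ D} :
    ∀ t : Tm σ D, (∀ n ∈ t.vars, s n = s' n) → t.subst s = t.subst s' := by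
  intro t
  induction t with
  | var n => intro h; exact h n rfl
  | func f ts ih =>
      intro h; simp only [Tm.subst]; congr 1; funext i
      exact ih i (fun n hn => h n (Set.mem_iUnion.2 ⟨i, hn⟩))
  | dconst a => intro _; rfl

theorem fm_subst_congr {s s' : ℕ → Tm σ D} :
    ∀ A : Fm σ D, (∀ n ∈ A.fv, s n = s' n) → A.subst s = A.subst s' := by
  intro A
  induction A generalizing s s' with
  | atom p ts =>
      intro h; simp only [Fm.subst]; congr 1; funext i
      exact tm_subst_congr _ (fun n hn => h n (Set.mem_iUnion.2 ⟨i, hn⟩))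
  | quant q xs ψ ih =>
      intro h; simp only [Fm.subst]; congr 1; funext i
      refine ih i (fun n hn => ?_)
      by_cases hb : ∃ j, xs j = n
      · simp [hb]
      · have hfv : n ∈ (Fm.quant q xs ψ).fv := by
          simp only [Fm.fv, Set.mem_diff, Set.mem_iUnion]
          exact ⟨⟨i, hn⟩, by simpa [Set.mem_range] using hb⟩
        simp [hb, h n hfv]

theorem fm_subst_id : ∀ A : Fm σ D, A.subst (fun n => .var n) = A := by
  have htm : ∀ t : Tm σ D, t.subst (fun n => .var n) = t := by
    intro t
    induction t with
    | var n => rfl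
    | func f ts ih => simp only [Tm.subst]; congr 1; funext i; exact ih i
    | dconst a => rfl
  intro A
  induction A with
  | atom p ts => simp only [Fm.subst]; congr 1; funext i; exact htm (ts i)
  | quant q xs ψ ih =>
      simp only [Fm.subst]
      congr 1
      funext i
      rw [fm_subst_congr (ψ i) (s' := fun n => .var n) (fun n _ => by by_cases hb : ∃ j, xs j = n <;> simp [hb])]
      exact ih i

theorem fm_subst_id_fv {s : ℕ → Tm σ D} (A : Fm σ D) (h : ∀ n ∈ A.fv, s n = .var n) :
    A.subst s = A := by
  rw [fm_subst_congr A (s' := fun n => .var n) h, fm_subst_id]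

/-- single-point substitution -/
def updT (z : ℕ) (t : Tm σ D) : ℕ → Tm σ D := fun n => if n = z then t else .var n

/-- substitution lemma under a `FreeFor` condition -/
theorem dbF_subst_ff (t : Tm σ D) (z : ℕ) :
    ∀ A : Fm σ D, FreeFor t z A → ∀ e,
    dbF e (A.subst (updT z t)) = dbF (fun n => dbT e (updT z t n)) A := by
  intro A
  induction A with
  | atom p ts =>
      intro _ e
      simp only [Fm.subst, dbF]
      congr 1
      funext i
      exact dbT_subst e _ (ts i)
  | quant q xs ψ ih =>
      intro hff e
      simp only [Fm.subst, dbF]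
      congr 1
      funext i
      by_cases hzb : ∃ j, xs j = z
      · -- z is bound here: inner substitution is the identity
        have hid : (ψ i).subst (fun n => if ∃ j, xs j = n then Tm.var n else updT z t n) = ψ i := by
          refine fm_subst_id_fv _ (fun n _ => ?_)
          by_cases hb : ∃ j, xs j = n
          · simp [hb]
          · have : n ≠ z := fun h => hb (h ▸ hzb)
            simp [hb, updT, this]
        rw [hid]
        refine dbF_congr _ (fun n _ => ?_)
        by_cases hb : ∃ j, xs j = n
        · simp [pushE, hb]
        · have : n ≠ z := fun h => hb (h ▸ hzb)
          simp [pushE, hb, dbT, updT, this]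
      · rcases hff with hff | hff | hff
        · exact absurd hff hzb
        · -- z not free in the quantified formula, hence not free in ψ i
          have hzfv : z ∉ (ψ i).fv := by
            intro hz
            exact hff (by
              simp only [Fm.fv, Set.mem_diff, Set.mem_iUnion]
              exact ⟨⟨i, hz⟩, by simpa [Set.mem_range] using hzb⟩)
          have hid : (ψ i).subst (fun n => if ∃ j, xs j = n then Tm.var n else updT z t n) = ψ i := by
            refine fm_subst_id_fv _ (fun n hn => ?_)
            by_cases hb : ∃ j, xs j = n
            · simp [hb]
            · have : n ≠ z := fun h => hzfv (h ▸ hn)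
              simp [hb, updT, this]
          rw [hid]
          refine dbF_congr _ (fun n hn => ?_)
          by_cases hb : ∃ j, xs j = n
          · simp [pushE, hb]
          · have : n ≠ z := fun h => hzfv (h ▸ hn)
            simp [pushE, hb, dbT, updT, this]
        · -- no capture case
          obtain ⟨hvars, hrec⟩ := hff
          have hs' : (fun n => if ∃ j, xs j = n then Tm.var n else updT z t n) = updT z t (D := D) (σ := σ) := by
            funext n
            by_cases hb : ∃ j, xs j = n
            · have : n ≠ z := fun h => hzb (h ▸ hb)
              simp [hb, updT, this]
            · simp [hb]
          rw [hs', ih i (hrec i)]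
          refine dbF_congr _ (fun n _ => ?_)
          by_cases hnz : n = z
          · have hb : ¬ ∃ j, xs j = n := by rw [hnz]; exact hzb
            have h1 : updT z t n = t := by simp [updT, hnz]
            rw [h1, dbT_push_notmem e t (fun m hm hex => hex.elim (fun j hj => hvars j (by rw [hj]; exact hm)))]
            simp [pushE, hb, h1]
          · by_cases hb : ∃ j, xs j = n
            · simp [updT, hnz, dbT, pushE, hb]
            · simp [updT, hnz, dbT, pushE, hb]
end DbX

namespace DbX
variable {σ : Sig} {D : Type}

/-! ### opening a de Bruijn binder to fresh free variables -/

def openT (f : ℕ → ℕ) (d : ℕ) : DTm σ D → DTm σ D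
  | .fvar n => .fvar n
  | .bvar d' j => if d' = d then .fvar (f j) else .bvar d' j
  | .func g ts => .func g (fun i => openT f d (ts i))
  | .dconst a => .dconst a

def openF (f : ℕ → ℕ) (d : ℕ) : DFm σ D → DFm σ D
  | .atom p ts => .atom p (fun i => openT f d (ts i))
  | .quant q ψ => .quant q (fun i => openF f (d+1) (ψ i))

theorem shift_open (f : ℕ → ℕ) (d : ℕ) :
    ∀ T : DTm σ D, shiftD (openT f d T) = openT f (d+1) (shiftD T) := by
  intro T
  induction T with
  | fvar n => rfl
  | bvar d' j =>
      simp only [openT, shiftD]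
      by_cases h : d' = d
      · simp [h, shiftD]
      · simp [h, shiftD, openT, Nat.succ_ne_succ.mpr h]
  | func g ts ih => simp only [openT, shiftD]; congr 1; funext i; exact ih i
  | dconst a => rfl

theorem open_db (f : ℕ → ℕ) :
    ∀ (A : Fm σ D) (e : ℕ → DTm σ D) (d : ℕ),
    dbF (fun n => openT f d (e n)) A = openF f d (dbF e A) := by
  have htm : ∀ (t : Tm σ D) (e : ℕ → DTm σ D) (d : ℕ),
      dbT (fun n => openT f d (e n)) t = openT f d (dbT e t) := by
    intro t
    induction t with
    | var n => intro e d; rfl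
    | func g ts ih => intro e d; simp only [dbT, openT]; congr 1; funext i; exact ih i e d
    | dconst a => intro e d; rfl
  intro A
  induction A with
  | atom p ts => intro e d; simp only [dbF, openF]; congr 1; funext i; exact htm (ts i) e d
  | quant q xs ψ ih =>
      intro e d
      simp only [dbF, openF]
      congr 1
      funext i
      rw [← ih i (pushE e xs) (d+1)]
      refine dbF_congr _ (fun n _ => ?_)
      by_cases hb : ∃ j, xs j = n
      · simp [pushE, hb, openT]
      · simp [pushE, hb, shift_open]

/-! ### replacing a free variable by a closed de Bruijn term -/

def replT (y : ℕ) (T : DTm σ D) : DTm σ D → DTm σ D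
  | .fvar n => if n = y then T else .fvar n
  | .bvar d j => .bvar d j
  | .func g ts => .func g (fun i => replT y T (ts i))
  | .dconst a => .dconst a

def replF (y : ℕ) (T : DTm σ D) : DFm σ D → DFm σ D
  | .atom p ts => .atom p (fun i => replT y T (ts i))
  | .quant q ψ => .quant q (fun i => replF y T (ψ i))

theorem shift_repl {y : ℕ} {T : DTm σ D} (hT : shiftD T = T) :
    ∀ U : DTm σ D, shiftD (replT y T U) = replT y T (shiftD U) := by
  intro U
  induction U with
  | fvar n =>
      by_cases h : n = y
      · simp [replT, shiftD, h, hT]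
      · simp [replT, shiftD, h]
  | bvar d j => rfl
  | func g ts ih => simp only [replT, shiftD]; congr 1; funext i; exact ih i
  | dconst a => rfl

theorem repl_db {y : ℕ} {T : DTm σ D} (hT : shiftD T = T) :
    ∀ (A : Fm σ D) (e : ℕ → DTm σ D),
    replF y T (dbF e A) = dbF (fun n => replT y T (e n)) A := by
  have htm : ∀ (t : Tm σ D) (e : ℕ → DTm σ D),
      replT y T (dbT e t) = dbT (fun n => replT y T (e n)) t := by
    intro t
    induction t with
    | var n => intro e; rfl
    | func g ts ih => intro e; simp only [dbT, replT]; congr 1; funext i; exact ih i e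
    | dconst a => intro e; rfl
  intro A
  induction A with
  | atom p ts => intro e; simp only [dbF, replF]; congr 1; funext i; exact htm (ts i) e
  | quant q xs ψ ih =>
      intro e
      simp only [dbF, replF]
      congr 1
      funext i
      rw [ih i (pushE e xs)]
      refine dbF_congr _ (fun n _ => ?_)
      by_cases hb : ∃ j, xs j = n
      · simp [pushE, hb, replT]
      · simp [pushE, hb, shift_repl hT]

theorem shift_db_e0 : ∀ t : Tm σ D, shiftD (dbT e0 t) = dbT e0 t := by
  intro t
  induction t with
  | var n => rfl
  | func g ts ih => simp only [dbT, shiftD]; congr 1; funext i; exact ih i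
  | dconst a => rfl

/-! ### free variables of de Bruijn objects -/

def dfvT : DTm σ D → Set ℕ
  | .fvar n => {n}
  | .bvar _ _ => ∅
  | .func _ ts => ⋃ i, dfvT (ts i)
  | .dconst _ => ∅

def dfvF : DFm σ D → Set ℕ
  | .atom _ ts => ⋃ i, dfvT (ts i)
  | .quant _ ψ => ⋃ i, dfvF (ψ i)

theorem dfv_shift : ∀ T : DTm σ D, dfvT (shiftD T) = dfvT T := by
  intro T
  induction T with
  | fvar n => rfl
  | bvar d j => rfl
  | func g ts ih => simp only [shiftD, dfvT]; exact Set.iUnion_congr ih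
  | dconst a => rfl

theorem dfv_dbT : ∀ (t : Tm σ D) (e : ℕ → DTm σ D),
    dfvT (dbT e t) = {m | ∃ n ∈ t.vars, m ∈ dfvT (e n)} := by
  intro t
  induction t with
  | var n => intro e; ext m; simp [dbT, Tm.vars]
  | func g ts ih =>
      intro e
      ext m
      simp only [dbT, dfvT, Set.mem_iUnion, Tm.vars, Set.mem_setOf_eq, ih _ e]
      constructor
      · rintro ⟨i, n, hn, hm⟩
        exact ⟨n, ⟨i, hn⟩, hm⟩
      · rintro ⟨n, ⟨i, hn⟩, hm⟩
        exact ⟨i, n, hn, hm⟩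
  | dconst a => intro e; ext m; simp [dbT, dfvT, Tm.vars]

theorem dfv_dbF : ∀ (A : Fm σ D) (e : ℕ → DTm σ D),
    dfvF (dbF e A) = {m | ∃ n ∈ A.fv, m ∈ dfvT (e n)} := by
  intro A
  induction A with
  | atom p ts =>
      intro e
      ext m
      simp only [dbF, dfvF, Set.mem_iUnion, Fm.fv, Set.mem_setOf_eq, dfv_dbT _ e]
      constructor
      · rintro ⟨i, n, hn, hm⟩
        exact ⟨n, ⟨i, hn⟩, hm⟩
      · rintro ⟨n, ⟨i, hn⟩, hm⟩
        exact ⟨i, n, hn, hm⟩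
  | quant q xs ψ ih =>
      intro e
      ext m
      simp only [dbF, dfvF, Set.mem_iUnion, Fm.fv, Set.mem_setOf_eq]
      constructor
      · rintro ⟨i, hi⟩
        rw [ih i (pushE e xs)] at hi
        obtain ⟨n, hn, hm⟩ := hi
        by_cases hb : ∃ j, xs j = n
        · exfalso; simp [pushE, hb, dfvT] at hm
        · refine ⟨n, ⟨Set.mem_iUnion.2 ⟨i, hn⟩, by simpa [Set.mem_range] using hb⟩, ?_⟩
          simpa [pushE, hb, dfv_shift] using hm
      · rintro ⟨n, ⟨hn, hnr⟩, hm⟩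
        obtain ⟨i, hi⟩ := Set.mem_iUnion.1 hn
        have hb : ¬ ∃ j, xs j = n := by simpa [Set.mem_range] using hnr
        refine ⟨i, ?_⟩
        rw [ih i (pushE e xs)]
        exact ⟨n, hi, by simpa [pushE, hb, dfv_shift] using hm⟩

theorem dfv_e0 (A : Fm σ D) : dfvF (dbF e0 A) = A.fv := by
  rw [dfv_dbF]
  ext m
  simp [e0, dfvT]

end DbX

namespace DbX
variable {σ : Sig} {D : Type}

theorem fv_subset_allVars : ∀ A : Fm σ D, A.fv ⊆ A.allVars := by
  intro A
  induction A with
  | atom p ts => exact fun n h => h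
  | quant q xs ψ ih =>
      intro n hn
      obtain ⟨hn1, _⟩ := hn
      obtain ⟨i, hi⟩ := Set.mem_iUnion.1 hn1
      exact Set.mem_union_right _ (Set.mem_iUnion.2 ⟨i, ih i hi⟩)

theorem bv_subset_allVars : ∀ A : Fm σ D, A.bv ⊆ A.allVars := by
  intro A
  induction A with
  | atom p ts => exact fun n h => h.elim
  | quant q xs ψ ih =>
      intro n hn
      rcases hn with hn | hn
      · exact Set.mem_union_left _ hn
      · obtain ⟨i, hi⟩ := Set.mem_iUnion.1 hn
        exact Set.mem_union_right _ (Set.mem_iUnion.2 ⟨i, ih i hi⟩)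

theorem vars_finite : ∀ t : Tm σ D, t.vars.Finite := by
  intro t
  induction t with
  | var n => exact Set.finite_singleton n
  | func f ts ih => exact Set.finite_iUnion ih
  | dconst a => exact Set.finite_empty

theorem allVars_finite : ∀ A : Fm σ D, A.allVars.Finite := by
  intro A
  induction A with
  | atom p ts => exact Set.finite_iUnion (fun i => vars_finite (ts i))
  | quant q xs ψ ih =>
      exact ((Set.finite_range xs).union (Set.finite_iUnion ih))

def sizeF : Fm σ D → ℕ
  | .atom _ _ => 1
  | .quant _ _ ψ => 1 + ∑ i, sizeF (ψ i)

theorem sizeF_subst (s : ℕ → Tm σ D) : ∀ A : Fm σ D, sizeF (A.subst s) = sizeF A := by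
  intro A
  induction A generalizing s with
  | atom p ts => rfl
  | quant q xs ψ ih =>
      simp only [Fm.subst, sizeF]
      congr 1
      exact Finset.sum_congr rfl (fun i _ => ih i _)

theorem sizeF_pos : ∀ A : Fm σ D, 1 ≤ sizeF A := by
  intro A
  cases A with
  | atom p ts => exact le_refl 1
  | quant q xs ψ => simp [sizeF]

theorem sizeF_lt (q : σ.Quant) (xs : Fin (σ.qk q) → ℕ) (ψ : Fin (σ.qn q) → Fm σ D) (i : Fin (σ.qn q)) :
    sizeF (ψ i) ≤ ∑ j, sizeF (ψ j) :=
  Finset.single_le_sum (f := fun j => sizeF (ψ j)) (fun j _ => Nat.zero_le _) (Finset.mem_univ i)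

/-! ### soundness: α-equivalent formulas have the same de Bruijn form -/

theorem alpha_sound {A B : Fm σ D} (h : AlphaEq A B) : ∀ e, dbF e A = dbF e B := by
  induction h with
  | atom p ts => intro e; rfl
  | quant q xs ys ψ φ zs hinj hfresh h ih =>
      intro e
      simp only [dbF]
      congr 1
      funext i
      have key : ∀ (ws : Fin (σ.qk q) → ℕ) (χ : Fin (σ.qn q) → Fm σ D),
          (∀ j, zs j ∉ (Fm.quant q ws χ).allVars) →
          dbF (pushE e zs) ((χ i).subst (renVar ws zs)) = dbF (pushE e ws) (χ i) := by
        intro ws χ hfr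
        have hbv : ∀ n ∈ (χ i).fv, renVar (D := D) (σ := σ) ws zs n = .var n ∨
            ∀ m ∈ (renVar (D := D) (σ := σ) ws zs n).vars, m ∉ (χ i).bv := by
          intro n _
          unfold renVar
          by_cases hb : ∃ j, ws j = n
          · simp only [hb, dif_pos]
            refine Or.inr (fun m hm hmb => ?_)
            have hm' : m = zs (Classical.choose hb) := hm
            refine hfr (Classical.choose hb) ?_
            rw [← hm']
            exact Set.mem_union_right _ (Set.mem_iUnion.2 ⟨i, bv_subset_allVars _ hmb⟩)
          · simp [hb]
        rw [dbF_subst (pushE e zs) (renVar ws zs) (χ i) hbv]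
        refine dbF_congr _ (fun n hn => ?_)
        unfold renVar
        by_cases hb : ∃ j, ws j = n
        · simp only [hb, dif_pos]
          show pushE e zs (zs (Classical.choose hb)) = pushE e ws n
          have hz : ∃ j, zs j = zs (Classical.choose hb) := ⟨Classical.choose hb, rfl⟩
          have : Classical.choose hz = Classical.choose hb :=
            hinj (Classical.choose_spec hz)
          simp [pushE, hz, hb, this]
        · simp only [hb, dif_neg]
          show pushE e zs n = pushE e ws n
          have hz : ¬ ∃ j, zs j = n := by
            rintro ⟨j, hj⟩
            refine hfr j ?_
            rw [hj]
            exact Set.mem_union_right _ (Set.mem_iUnion.2 ⟨i, fv_subset_allVars _ hn⟩)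
          simp [pushE, hz, hb]
      have h1 := key xs ψ (fun j hj => hfresh j (Set.mem_union_left _ hj))
      have h2 := key ys φ (fun j hj => hfresh j (Set.mem_union_right _ hj))
      rw [← h1, ← h2]
      exact ih i (pushE e zs)
end DbX

namespace DbX
variable {σ : Sig} {D : Type}

theorem dbT_e0_inj : ∀ t t' : Tm σ D, dbT e0 t = dbT e0 t' → t = t' := by
  intro t
  induction t with
  | var n =>
      intro t' h
      cases t' with
      | var m => simpa [dbT, e0, DTm.fvar.injEq] using h
      | func g ts => exact absurd h (by simp [dbT, e0])
      | dconst a => exact absurd h (by simp [dbT, e0])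
  | func f ts ih =>
      intro t' h
      cases t' with
      | var m => exact absurd h (by simp [dbT, e0])
      | func g ts' =>
          simp only [dbT, DTm.func.injEq] at h
          obtain ⟨rfl, h2⟩ := h
          have h2' := eq_of_heq h2
          congr 1
          funext i
          exact ih i (ts' i) (congrFun h2' i)
      | dconst a => exact absurd h (by simp [dbT, e0])
  | dconst a =>
      intro t' h
      cases t' with
      | var m => exact absurd h (by simp [dbT, e0])
      | func g ts => exact absurd h (by simp [dbT, e0])
      | dconst b => simpa [dbT, DTm.dconst.injEq] using h

theorem exists_fresh (S : Set ℕ) (hS : S.Finite) (k : ℕ) :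
    ∃ zs : Fin k → ℕ, Function.Injective zs ∧ ∀ j, zs j ∉ S := by
  obtain ⟨N, hN⟩ := hS.bddAbove
  refine ⟨fun j => N + 1 + j.val, ?_, ?_⟩
  · intro a b h
    dsimp only at h
    have hab : (a : ℕ) = b := by omega
    exact Fin.val_injective hab
  · intro j hj
    have h2 : N + 1 + (j : ℕ) ≤ N := hN hj
    omega

theorem alpha_complete : ∀ (N : ℕ) (A B : Fm σ D), sizeF A ≤ N →
    dbF e0 A = dbF e0 B → AlphaEq A B := by
  intro N
  induction N with
  | zero => intro A B hs _; exact absurd (le_trans (sizeF_pos A) hs) (by omega)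
  | succ N ih =>
      intro A B hs h
      cases A with
      | atom p ts =>
          cases B with
          | atom p' ts' =>
              simp only [dbF, DFm.atom.injEq] at h
              obtain ⟨rfl, h2⟩ := h
              have h2' := eq_of_heq h2
              have : ts = ts' := funext fun i => dbT_e0_inj _ _ (congrFun h2' i)
              rw [this]
              exact AlphaEq.atom _ _
          | quant q' ys φ => exact absurd h (by simp [dbF])
      | quant q xs ψ =>
          cases B with
          | atom p' ts' => exact absurd h (by simp [dbF])
          | quant q' ys φ =>
              simp only [dbF, DFm.quant.injEq] at h
              obtain ⟨rfl, h2⟩ := h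
              have h2' := eq_of_heq h2
              have hbody : ∀ i, dbF (pushE e0 xs) (ψ i) = dbF (pushE e0 ys) (φ i) :=
                fun i => congrFun h2' i
              obtain ⟨zs, hinj, hfr⟩ := exists_fresh
                ((Fm.quant q xs ψ).allVars ∪ (Fm.quant q ys φ).allVars)
                ((allVars_finite _).union (allVars_finite _)) (σ.qk q)
              refine AlphaEq.quant q xs ys ψ φ zs hinj hfr (fun i => ?_)
              -- the `open`ing function
              set f : ℕ → ℕ := fun j => if h : j < σ.qk q then zs ⟨j, h⟩ else 0 with hf
              have key : ∀ (ws : Fin (σ.qk q) → ℕ) (χ : Fin (σ.qn q) → Fm σ D),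
                  (∀ j, zs j ∉ (Fm.quant q ws χ).allVars) →
                  dbF e0 ((χ i).subst (renVar ws zs)) = openF f 0 (dbF (pushE e0 ws) (χ i)) := by
                intro ws χ hfrr
                have hbv : ∀ n ∈ (χ i).fv, renVar (D := D) (σ := σ) ws zs n = .var n ∨
                    ∀ m ∈ (renVar (D := D) (σ := σ) ws zs n).vars, m ∉ (χ i).bv := by
                  intro n _
                  unfold renVar
                  by_cases hb : ∃ j, ws j = n
                  · simp only [hb, dif_pos]
                    refine Or.inr (fun m hm hmb => ?_)
                    have hm' : m = zs (Classical.choose hb) := hm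
                    refine hfrr (Classical.choose hb) ?_
                    rw [← hm']
                    exact Set.mem_union_right _ (Set.mem_iUnion.2 ⟨i, bv_subset_allVars _ hmb⟩)
                  · simp [hb]
                rw [dbF_subst e0 (renVar ws zs) (χ i) hbv, ← open_db f (χ i) (pushE e0 ws) 0]
                refine dbF_congr _ (fun n _ => ?_)
                unfold renVar
                by_cases hb : ∃ j, ws j = n
                · simp only [hb, dif_pos]
                  show dbT e0 (.var (zs (Classical.choose hb))) = openT f 0 (pushE e0 ws n)
                  have : openT (σ := σ) (D := D) f 0 (pushE e0 ws n) = .fvar (f (Classical.choose hb).val) := by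
                    simp [pushE, hb, openT]
                  rw [this]
                  simp only [dbT, e0, hf]
                  congr 1
                  simp [(Classical.choose hb).isLt]
                · simp only [hb, dif_neg]
                  show dbT e0 (.var n) = openT f 0 (pushE e0 ws n)
                  simp [pushE, hb, dbT, e0, openT, shiftD]
              have hfx : ∀ j, zs j ∉ (Fm.quant q xs ψ).allVars :=
                fun j hj => hfr j (Set.mem_union_left _ hj)
              have hfy : ∀ j, zs j ∉ (Fm.quant q ys φ).allVars :=
                fun j hj => hfr j (Set.mem_union_right _ hj)
              refine ih _ _ ?_ ?_
              · rw [sizeF_subst]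
                have h1 : sizeF (ψ i) ≤ ∑ j, sizeF (ψ j) := sizeF_lt q xs ψ i
                have h2 : 1 + ∑ j, sizeF (ψ j) ≤ N + 1 := hs
                omega
              · rw [key xs ψ hfx, key ys φ hfy, hbody i]

theorem alpha_iff (A B : Fm σ D) : AlphaEq A B ↔ dbF e0 A = dbF e0 B :=
  ⟨fun h => alpha_sound h e0, fun h => alpha_complete (sizeF A) A B (le_refl _) h⟩

theorem fv_eq_of_db {A B : Fm σ D} (h : dbF e0 A = dbF e0 B) : A.fv = B.fv := by
  rw [← dfv_e0 A, ← dfv_e0 B, h]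

theorem mem_fv_subst {A : Fm σ D} {z y : ℕ} (hz : z ∈ A.fv)
    (hff : FreeFor (.var y) z A) : y ∈ (A.subst (updT z (.var y))).fv := by
  rw [← dfv_e0, dbF_subst_ff (.var y) z A hff e0, dfv_dbF]
  refine ⟨z, hz, ?_⟩
  simp [updT, dbT, e0, dfvT]
end DbX

namespace DbX
open Classical

theorem atomFm_eq (χ : ChiMap sig0 2) (zs : Fin 1 → ℕ) (a : RAtom 2 1) :
    χ.atomFm zs a = (χ.fp a.idx).subst (updT (zs 0) (χ.tm (a.args 0))) := by
  unfold ChiMap.atomFm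
  congr 1
  funext m
  by_cases h : ∃ j : Fin 1, zs j = m
  · have h0 : zs 0 = m := by
      obtain ⟨j, hj⟩ := h
      rwa [Subsingleton.elim (α := Fin 1) 0 j]
    rw [dif_pos h]
    have hm : m = zs 0 := h0.symm
    simp only [updT, if_pos hm]
    exact congrArg (fun j => χ.tm (a.args j)) (Subsingleton.elim _ _)
  · have hm : m ≠ zs 0 := fun e => h ⟨0, e.symm⟩
    simp [h, updT, hm]

theorem fmSet_nil (χ : ChiMap sig0 2) (zs : Fin 1 → ℕ) :
    χ.fmSet zs ([] : List (RAtom 2 1)) = ∅ := by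
  ext A; simp [ChiMap.fmSet]

theorem fmSet_single (χ : ChiMap sig0 2) (zs : Fin 1 → ℕ) (a : RAtom 2 1) :
    χ.fmSet zs [a] = {χ.atomFm zs a} := by
  ext A; simp [ChiMap.fmSet]

end DbX

namespace DbX
open Classical

theorem app_core (χ : ChiMap sig0 2) (zs : Fin 1 → ℕ) (Γ Δ : Set (Fm sig0 Empty))
    (hff : ∀ cl ∈ Theta0, ∀ a ∈ cl.atoms, ∀ j : Fin 1,
      FreeFor (χ.tm (a.args j)) (zs j) (χ.fp a.idx) ∧
      (∀ x, a.args j = RTm.rvar x →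
        χ.fvv x ∉ (⋃ A ∈ Γ ∪ Δ, Fm.fv A) ∪ (concFm (σ := sig0) () zs χ).fv))
    (ih : ∀ cl ∈ Theta0,
      ∃ A ∈ Γ ∪ χ.fmSet zs cl.ant, ∃ B ∈ Δ ∪ χ.fmSet zs cl.suc, AlphaEq A B) :
    ∃ A ∈ Γ, ∃ B ∈ Δ, AlphaEq A B := by
  set z := zs 0 with hzdef
  set y := χ.fvv 0 with hydef
  -- eigenvariable freshness
  have hy : y ∉ (⋃ A ∈ Γ ∪ Δ, Fm.fv A) ∪ (concFm (σ := sig0) () zs χ).fv :=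
    (hff ⟨[a1v],[a2v]⟩ (by simp [Theta0]) a2v (by simp [RClause.atoms, a1v, a2v])
      0 |>.2) 0 rfl
  have hyΓΔ : ∀ A ∈ Γ ∪ Δ, y ∉ A.fv := fun A hA hy' =>
    hy (Set.mem_union_left _ (Set.mem_biUnion hA hy'))
  have hyconc : y ∉ (concFm (σ := sig0) () zs χ).fv := fun h =>
    hy (Set.mem_union_right _ h)
  -- FreeFor facts
  have ff1 : FreeFor (Tm.var y) z (χ.fp 0) := by
    have := (hff ⟨[a1v],[a2v]⟩ (by simp [Theta0]) a1v (by simp [RClause.atoms]) 0).1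
    simpa [a1v, ChiMap.tm] using this
  have ff2 : FreeFor (Tm.var y) z (χ.fp 1) := by
    have := (hff ⟨[a1v],[a2v]⟩ (by simp [Theta0]) a2v
      (by simp [RClause.atoms, a1v, a2v]) 0).1
    simpa [a2v, ChiMap.tm] using this
  have ffc3_0 : FreeFor (χ.fc 3) z (χ.fp 0) := by
    have := (hff ⟨[aC 0 3],[]⟩ (by simp [Theta0]) (aC 0 3) (by simp [RClause.atoms]) 0).1
    simpa [aC, ChiMap.tm] using this
  have ffc3_1 : FreeFor (χ.fc 3) z (χ.fp 1) := by
    have := (hff ⟨[],[aC 1 3]⟩ (by simp [Theta0]) (aC 1 3) (by simp [RClause.atoms]) 0).1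
    simpa [aC, ChiMap.tm] using this
  have hfvconc : (concFm (σ := sig0) () zs χ).fv = (⋃ i, (χ.fp i).fv) \ Set.range zs := rfl
  -- z ∉ fv argument
  have hz_not_fv : ∀ (i : Fin 2) (C : Fm sig0 Empty), FreeFor (Tm.var y) z (χ.fp i) →
      dbF e0 ((χ.fp i).subst (updT z (Tm.var y))) = dbF e0 C → y ∉ C.fv →
      z ∉ (χ.fp i).fv := by
    intro i C ffi hdb hyC hz'
    have hyF : y ∉ ((χ.fp i).subst (updT z (Tm.var y))).fv := by
      rw [fv_eq_of_db hdb]; exact hyC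
    by_cases hyz : y = z
    · have hid : (χ.fp i).subst (updT z (Tm.var y)) = χ.fp i := by
        refine fm_subst_id_fv _ (fun n _ => ?_)
        by_cases hnz : n = z
        · simp [updT, hnz, hyz]
        · simp [updT, hnz]
      rw [hid] at hyF
      exact hyF (hyz ▸ hz')
    · exact hyF (mem_fv_subst hz' ffi)
  have hsub_id : ∀ (i : Fin 2) (t : Tm sig0 Empty), z ∉ (χ.fp i).fv →
      (χ.fp i).subst (updT z t) = χ.fp i := fun i t hz =>
    fm_subst_id_fv _ (fun n hn => by
      have : n ≠ z := fun e => hz (e ▸ hn)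
      simp [updT, this])
  -- premise instances
  have ih1 : ∃ A ∈ Γ ∪ {(χ.fp 0).subst (updT z (Tm.var y))},
      ∃ B ∈ Δ ∪ {(χ.fp 1).subst (updT z (Tm.var y))}, AlphaEq A B := by
    simpa [fmSet_single, atomFm_eq, a1v, a2v, ChiMap.tm] using
      ih ⟨[a1v],[a2v]⟩ (by simp [Theta0])
  have ih2 : ∃ A ∈ Γ, ∃ B ∈ Δ ∪ {(χ.fp 0).subst (updT z (χ.fc 1))}, AlphaEq A B := by
    simpa [fmSet_single, fmSet_nil, atomFm_eq, aC, ChiMap.tm] using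
      ih ⟨[],[aC 0 1]⟩ (by simp [Theta0])
  have ih5 : ∃ A ∈ Γ ∪ {(χ.fp 1).subst (updT z (χ.fc 2))}, ∃ B ∈ Δ, AlphaEq A B := by
    simpa [fmSet_single, fmSet_nil, atomFm_eq, aC, ChiMap.tm] using
      ih ⟨[aC 1 2],[]⟩ (by simp [Theta0])
  have ih6 : ∃ A ∈ Γ ∪ {(χ.fp 0).subst (updT z (χ.fc 3))}, ∃ B ∈ Δ, AlphaEq A B := by
    simpa [fmSet_single, fmSet_nil, atomFm_eq, aC, ChiMap.tm] using
      ih ⟨[aC 0 3],[]⟩ (by simp [Theta0])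
  have ih7 : ∃ A ∈ Γ, ∃ B ∈ Δ ∪ {(χ.fp 1).subst (updT z (χ.fc 3))}, AlphaEq A B := by
    simpa [fmSet_single, fmSet_nil, atomFm_eq, aC, ChiMap.tm] using
      ih ⟨[],[aC 1 3]⟩ (by simp [Theta0])
  obtain ⟨A, hA, B, hB, hab⟩ := ih1
  rw [alpha_iff] at hab
  rcases (Set.mem_union _ _ _).1 hA with hA | hA
  · rcases (Set.mem_union _ _ _).1 hB with hB | hB
    · -- case (a)
      exact ⟨A, hA, B, hB, (alpha_iff _ _).2 hab⟩
    · -- case (b) : B is χ[p₂]{y/z}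
      rw [Set.mem_singleton_iff] at hB
      subst hB
      have hz1 : z ∉ (χ.fp 1).fv :=
        hz_not_fv 1 A ff2 hab.symm (hyΓΔ A (Set.mem_union_left _ hA))
      obtain ⟨A', hA', B', hB', hab5⟩ := ih5
      rcases (Set.mem_union _ _ _).1 hA' with hA' | hA'
      · exact ⟨A', hA', B', hB', hab5⟩
      · rw [Set.mem_singleton_iff] at hA'
        subst hA'
        refine ⟨A, hA, B', hB', (alpha_iff _ _).2 ?_⟩
        rw [alpha_iff] at hab5
        rw [hab, hsub_id 1 _ hz1, ← hsub_id 1 (χ.fc 2) hz1]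
        exact hab5
  · -- A is χ[p₁]{y/z}
    rw [Set.mem_singleton_iff] at hA
    subst hA
    rcases (Set.mem_union _ _ _).1 hB with hB | hB
    · -- case (c)
      have hz0 : z ∉ (χ.fp 0).fv :=
        hz_not_fv 0 B ff1 hab (hyΓΔ B (Set.mem_union_right _ hB))
      obtain ⟨A', hA', B', hB', hab2⟩ := ih2
      rcases (Set.mem_union _ _ _).1 hB' with hB' | hB'
      · exact ⟨A', hA', B', hB', hab2⟩
      · rw [Set.mem_singleton_iff] at hB'
        subst hB'
        refine ⟨A', hA', B, hB, (alpha_iff _ _).2 ?_⟩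
        rw [alpha_iff] at hab2
        rw [hab2, hsub_id 0 _ hz0, ← hsub_id 0 (Tm.var y) hz0]
        exact hab
    · -- case (d)
      rw [Set.mem_singleton_iff] at hB
      subst hB
      rw [dbF_subst_ff _ _ _ ff1 e0, dbF_subst_ff _ _ _ ff2 e0] at hab
      have hT3 : shiftD (dbT e0 (χ.fc 3)) = dbT e0 (χ.fc 3) := shift_db_e0 _
      have hab2 := congrArg (replF y (dbT e0 (χ.fc 3))) hab
      rw [repl_db hT3, repl_db hT3] at hab2
      have henv : ∀ i : Fin 2,
          dbF (fun n => replT y (dbT e0 (χ.fc 3)) (dbT e0 (updT z (Tm.var y) n))) (χ.fp i)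
          = dbF (fun n => dbT e0 (updT z (χ.fc 3) n)) (χ.fp i) := by
        intro i
        refine dbF_congr _ (fun n hn => ?_)
        by_cases hnz : n = z
        · simp [updT, hnz, dbT, e0, replT]
        · have hny : n ≠ y := by
            intro e
            refine hyconc ?_
            rw [hfvconc]
            refine ⟨Set.mem_iUnion.2 ⟨i, e ▸ hn⟩, ?_⟩
            rintro ⟨j, hj⟩
            refine hnz ?_
            rw [e, ← hj, Subsingleton.elim j 0]
            try exact hzdef.symm
          simp [updT, hnz, dbT, e0, replT, hny]
      rw [henv 0, henv 1] at hab2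
      rw [← dbF_subst_ff _ _ _ ffc3_0 e0, ← dbF_subst_ff _ _ _ ffc3_1 e0] at hab2
      obtain ⟨A6, hA6, B6, hB6, hab6⟩ := ih6
      rcases (Set.mem_union _ _ _).1 hA6 with hA6 | hA6
      · exact ⟨A6, hA6, B6, hB6, hab6⟩
      · obtain ⟨A7, hA7, B7, hB7, hab7⟩ := ih7
        rcases (Set.mem_union _ _ _).1 hB7 with hB7 | hB7
        · exact ⟨A7, hA7, B7, hB7, hab7⟩
        · rw [Set.mem_singleton_iff] at hA6 hB7
          subst hA6; subst hB7
          rw [alpha_iff] at hab6 hab7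
          exact ⟨A7, hA7, B6, hB6, (alpha_iff _ _).2 (hab7.trans (hab2.symm.trans hab6))⟩
end DbX

namespace DbX
open Classical

theorem part1 : ∀ sq : Sqnt sig0, Derives G0 ∅ sq →
    ∃ A ∈ sq.ant, ∃ B ∈ sq.suc, AlphaEq A B := by
  intro sq h
  induction h with
  | hyp hs => exact absurd hs (Set.notMem_empty _)
  | ax h => exact ⟨_, Set.mem_singleton _, _, Set.mem_singleton _, h⟩
  | weaken h hΓ hΔ ih =>
      obtain ⟨A, hA, B, hB, hab⟩ := ih
      exact ⟨A, hΓ hA, B, hΔ hB, hab⟩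
  | cut hcut h1 h2 ih1 ih2 =>
      obtain ⟨A1, hA1, B1, hB1, hab1⟩ := ih1
      obtain ⟨A2, hA2, B2, hB2, hab2⟩ := ih2
      rcases Set.mem_insert_iff.1 hB1 with hB1 | hB1
      · rcases Set.mem_insert_iff.1 hA2 with hA2 | hA2
        · subst hB1; subst hA2
          exact ⟨A1, hA1, B2, hB2,
            (alpha_iff _ _).2 (((alpha_iff _ _).1 hab1).trans ((alpha_iff _ _).1 hab2))⟩
        · exact ⟨A2, hA2, B2, hB2, hab2⟩
      · exact ⟨A1, hA1, B1, hB1, hab1⟩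
  | app hR χ zs Γ Δ hok hprem ih =>
      rcases (show _ = (Rule.mk () true Theta0 : Rule sig0) ∨ _ = (Rule.mk () false Theta0 : Rule sig0) by
        simpa [G0] using hR) with hR' | hR' <;> subst hR'
      · obtain ⟨A, hA, B, hB, hab⟩ := app_core χ zs Γ Δ hok.2.2.2 ih
        exact ⟨A, hA, B, Set.mem_insert_of_mem _ hB, hab⟩
      · obtain ⟨A, hA, B, hB, hab⟩ := app_core χ zs Γ Δ hok.2.2.2 ih
        exact ⟨A, Set.mem_insert_of_mem _ hA, B, hB, hab⟩

theorem part2 : ∀ sq : Sqnt sig0, FVCond {sq} → Derives G0 ∅ sq →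
    Deriv G0 ∅ ∅ sq := by
  intro sq _ h
  obtain ⟨A, hA, B, hB, hab⟩ := part1 sq h
  exact Deriv.weaken (Deriv.ax hab)
    (Set.singleton_subset_iff.2 hA) (Set.singleton_subset_iff.2 hB)

/-! ### non-coherence -/

def cI3 : ℕ → Fin 3
  | 1 => 0 | 2 => 1 | 3 => 2 | 4 => 0 | 5 => 1 | 6 => 2 | _ => 0

def pI3 : Fin 2 → (Fin 1 → Fin 3) → Bool :=
  fun i f => if i = 0 then decide (f 0 = 0) else decide (f 0 ≠ 1)

theorem ruleVars_mem : ∀ x ∈ ruleVars Theta0, x = 0 := by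
  rintro x ⟨cl, hcl, a, ha, j, hj⟩
  simp only [Theta0, List.mem_cons, List.not_mem_nil, or_false] at hcl
  rcases hcl with rfl|rfl|rfl|rfl|rfl|rfl|rfl <;>
    simp only [RClause.atoms, List.mem_append, List.mem_cons, List.mem_singleton,
      List.not_mem_nil, or_false, false_or] at ha <;>
    (first | (rcases ha with rfl | rfl) | subst ha) <;>
    simp [a1v, a2v, aC] at hj <;> omega

theorem ruleVars_zero : (0 : ℕ) ∈ ruleVars Theta0 :=
  ⟨⟨[a1v],[a2v]⟩, by simp [Theta0], a1v, by simp [RClause.atoms], 0, rfl⟩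

theorem ruleConsts_Theta0 : ∀ c ∈ ruleConsts Theta0, c = 1 ∨ c = 2 ∨ c = 3 := by
  rintro c ⟨cl, hcl, a, ha, j, hj⟩
  simp only [Theta0, List.mem_cons, List.not_mem_nil, or_false] at hcl
  rcases hcl with rfl|rfl|rfl|rfl|rfl|rfl|rfl <;>
    simp only [RClause.atoms, List.mem_append, List.mem_cons, List.mem_singleton,
      List.not_mem_nil, or_false, false_or] at ha <;>
    (first | (rcases ha with rfl | rfl) | subst ha) <;>
    simp [a1v, a2v, aC] at hj <;> omega

theorem goodren : GoodRen Theta0 Theta0 (· + 1) (· + 3) := by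
  refine ⟨fun a b h => by simp only at h; omega, fun a b h => by simp only at h; omega, ?_, ?_⟩
  · intro x hx
    have hx0 : x = 0 := ruleVars_mem x hx
    subst hx0
    refine ⟨fun _ => ?_, fun h => absurd hx h⟩
    rw [Set.mem_union]
    rintro (h | h) <;> simpa using ruleVars_mem _ h
  · intro c hc
    have hc' := ruleConsts_Theta0 c hc
    refine ⟨fun _ => ?_, fun h => absurd hc h⟩
    rw [Set.mem_union]
    rintro (h | h) <;>
      · have h2 := ruleConsts_Theta0 _ h
        simp only at h2
        rcases hc' with rfl | rfl | rfl <;> rcases h2 with h2 | h2 | h2 <;> omega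

theorem consistent0 : RConsistent (Theta0 ++ renClauses (· + 1) (· + 3) Theta0) := by
  refine ⟨Fin 3, ⟨0⟩, cI3, pI3, fun _ => 0, ?_⟩
  intro cl hcl
  rcases List.mem_append.1 hcl with h | h
  · simp only [Theta0, List.mem_cons, List.not_mem_nil, or_false] at h
    rcases h with rfl|rfl|rfl|rfl|rfl|rfl|rfl
    · exact Or.inr ⟨a2v, by simp, by decide⟩
    · exact Or.inr ⟨aC 0 1, by simp, by decide⟩
    · exact Or.inr ⟨aC 1 1, by simp, by decide⟩
    · exact Or.inl ⟨aC 0 2, by simp, by decide⟩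
    · exact Or.inl ⟨aC 1 2, by simp, by decide⟩
    · exact Or.inl ⟨aC 0 3, by simp, by decide⟩
    · exact Or.inr ⟨aC 1 3, by simp, by decide⟩
  · simp only [renClauses, Theta0, List.map_cons, List.map_nil, List.mem_cons,
      List.not_mem_nil, or_false] at h
    rcases h with rfl|rfl|rfl|rfl|rfl|rfl|rfl
    · exact Or.inr ⟨a2v.ren (· + 1) (· + 3), by simp [RClause.ren], by decide⟩
    · exact Or.inr ⟨(aC 0 1).ren (· + 1) (· + 3), by simp [RClause.ren], by decide⟩
    · exact Or.inr ⟨(aC 1 1).ren (· + 1) (· + 3), by simp [RClause.ren], by decide⟩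
    · exact Or.inl ⟨(aC 0 2).ren (· + 1) (· + 3), by simp [RClause.ren], by decide⟩
    · exact Or.inl ⟨(aC 1 2).ren (· + 1) (· + 3), by simp [RClause.ren], by decide⟩
    · exact Or.inl ⟨(aC 0 3).ren (· + 1) (· + 3), by simp [RClause.ren], by decide⟩
    · exact Or.inr ⟨(aC 1 3).ren (· + 1) (· + 3), by simp [RClause.ren], by decide⟩

theorem part3 : ¬ Coherent G0 := by
  intro h
  exact h () Theta0 Theta0 (by simp [G0]) (by simp [G0]) (· + 1) (· + 3)
    goodren consistent0
end DbX


/-- Every sequent provable in `G₀` is a logical axiom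
(contains `α`-equivalent formulas on both sides); consequently `G₀` admits
standard cut-elimination, although it is not coherent. -/
theorem G0_provable_iff_axiom :
    (∀ sq : Sqnt sig0, Derives G0 ∅ sq → ∃ A ∈ sq.ant, ∃ B ∈ sq.suc, AlphaEq A B) ∧
    (∀ sq : Sqnt sig0, FVCond {sq} → Derives G0 ∅ sq → Deriv G0 ∅ ∅ sq) ∧
    ¬ Coherent G0 := by
  exact ⟨DbX.part1, DbX.part2, DbX.part3⟩
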